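/- Let H be a hyperplane in ℝ^n, P ⊆ H a polytope, φ : P → ℝ a convex function, z ∈ ℝ^n \ H, and ω ∈ ℝ. Define Φ : Conv(z, P) → ℝ by Φ(t·x + (1-t)·z) = t·φ(x) + (1-t)·ω for x ∈ P and t ∈ [0,1]. Then Φ is well-defined and convex on Conv(z, P). -/

import Mathlib

theorem cone_convex_extension (n : ℕ) (f : (Fin n → ℝ) →ₗ[ℝ] ℝ) (c : ℝ)
    (P : Set (Fin n → ℝ)) (hPH : ∀ x ∈ P, f x = c) (hPconv : Convex ℝ P)
    (φ : (Fin n → ℝ) → ℝ) (hφ : ConvexOn ℝ P φ)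
    (z : Fin n → ℝ) (hz : f z ≠ c) (ω : ℝ) :
    (∀ x ∈ P, ∀ x' ∈ P, ∀ t ∈ Set.Icc (0 : ℝ) 1, ∀ t' ∈ Set.Icc (0 : ℝ) 1,
        t • x + (1 - t) • z = t' • x' + (1 - t') • z →
        t * φ x + (1 - t) * ω = t' * φ x' + (1 - t') * ω) ∧
    ∃ Φ : (Fin n → ℝ) → ℝ,
      (∀ x ∈ P, ∀ t ∈ Set.Icc (0 : ℝ) 1,
        Φ (t • x + (1 - t) • z) = t * φ x + (1 - t) * ω) ∧
      ConvexOn ℝ (convexHull ℝ (insert z P)) Φ := by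
  classical
  have hd : c - f z ≠ 0 := sub_ne_zero.mpr (Ne.symm hz)
  have ht_eq : ∀ x ∈ P, ∀ t : ℝ, f (t • x + (1 - t) • z) = t * c + (1 - t) * f z := by
    intro x hx t
    simp [map_add, map_smul, hPH x hx]
  constructor
  · intro x hx x' hx' t ht t' ht' heq
    have h1 : t * c + (1 - t) * f z = t' * c + (1 - t') * f z := by
      rw [← ht_eq x hx t, ← ht_eq x' hx' t', heq]
    have htt : t = t' := by
      have h2 : (t - t') * (c - f z) = 0 := by nlinarith [h1]
      rcases mul_eq_zero.mp h2 with h | h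
      · linarith
      · exact absurd h hd
    subst htt
    rcases eq_or_ne t 0 with rfl | h0
    · ring
    · have hcancel : t • x = t • x' := by
        have := heq
        have h3 : t • x + (1 - t) • z - (1 - t) • z = t • x' + (1 - t) • z - (1 - t) • z := by
          rw [heq]
        simpa using h3
      have : x = x' := smul_right_injective (Fin n → ℝ) h0 hcancel
      rw [this]
  · rcases P.eq_empty_or_nonempty with hP | hPne
    · refine ⟨fun _ => ω, ?_, ?_⟩
      · intro x hx; rw [hP] at hx; exact absurd hx (Set.notMem_empty x)
      · exact convexOn_const ω (convex_convexHull ℝ _)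
    · set Φ : (Fin n → ℝ) → ℝ := fun p =>
        if f p = f z then ω
        else ((f p - f z)/(c - f z)) *
            φ (((f p - f z)/(c - f z))⁻¹ • (p - (1 - (f p - f z)/(c - f z)) • z))
          + (1 - (f p - f z)/(c - f z)) * ω with hΦ
      have hspec : ∀ x ∈ P, ∀ t : ℝ, 0 ≤ t → t ≤ 1 →
          Φ (t • x + (1 - t) • z) = t * φ x + (1 - t) * ω := by
        intro x hx t ht0 ht1
        have hf : f (t • x + (1 - t) • z) = t * c + (1 - t) * f z := ht_eq x hx t
        rcases eq_or_ne t 0 with rfl | htne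
        · simp only [zero_smul, zero_add, sub_zero, one_smul]
          rw [hΦ]; simp
        · have hsub : f (t • x + (1 - t) • z) - f z = t * (c - f z) := by rw [hf]; ring
          have hne : f (t • x + (1 - t) • z) ≠ f z := by
            intro h
            have h4 : t * (c - f z) = 0 := by rw [← hsub, h, sub_self]
            rcases mul_eq_zero.mp h4 with h | h
            · exact htne h
            · exact hd h
          have htval : (f (t • x + (1 - t) • z) - f z)/(c - f z) = t := by
            rw [hsub]; field_simp
          have hx_rec : t⁻¹ • ((t • x + (1 - t) • z) - (1 - t) • z) = x := by
            rw [add_sub_cancel_right, smul_smul, inv_mul_cancel₀ htne, one_smul]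
          rw [hΦ]
          simp only []
          rw [if_neg hne, htval, hx_rec]
      have hmem : ∀ p ∈ convexHull ℝ (insert z P),
          ∃ x ∈ P, ∃ t : ℝ, 0 ≤ t ∧ t ≤ 1 ∧ p = t • x + (1 - t) • z := by
        intro p hp
        rw [convexHull_insert hPne, mem_convexJoin] at hp
        obtain ⟨z', hz', y, hy, hseg⟩ := hp
        rw [Set.mem_singleton_iff] at hz'
        subst hz'
        rw [hPconv.convexHull_eq] at hy
        obtain ⟨a, b, ha, hb, hab, hsum⟩ := hseg
        refine ⟨y, hy, b, hb, by linarith, ?_⟩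
        have h1a : 1 - b = a := by linarith
        rw [h1a, ← hsum]; abel
      refine ⟨Φ, fun x hx t ht => hspec x hx t ht.1 ht.2, convex_convexHull ℝ _, ?_⟩
      intro p hp q hq lam mu hlam hmu hsum
      obtain ⟨x, hx, a, ha0, ha1, rfl⟩ := hmem p hp
      obtain ⟨y, hy, b, hb0, hb1, rfl⟩ := hmem q hq
      rw [hspec x hx a ha0 ha1, hspec y hy b hb0 hb1]
      set s : ℝ := lam * a + mu * b with hs
      rcases eq_or_lt_of_le (show (0:ℝ) ≤ s from by positivity) with hs0 | hs0
      · -- s = 0 : the combination is z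
        have hla : lam * a = 0 := by nlinarith
        have hmb : mu * b = 0 := by nlinarith
        have hz_eq : lam • (a • x + (1 - a) • z) + mu • (b • y + (1 - b) • z) = z := by
          have : lam • (a • x + (1 - a) • z) + mu • (b • y + (1 - b) • z)
              = (lam * a) • x + (mu * b) • y + (lam * (1 - a) + mu * (1 - b)) • z := by
            module
          rw [this, hla, hmb]
          have h6 : lam * (1 - a) + mu * (1 - b) = 1 := by
            linear_combination hsum - hla - hmb
          rw [h6]; simp
        rw [hz_eq]
        have hΦz : Φ z = ω := by rw [hΦ]; simp
        rw [hΦz]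
        simp only [smul_eq_mul]
        have heqr : lam * (a * φ x + (1 - a) * ω) + mu * (b * φ y + (1 - b) * ω) = ω := by
          linear_combination φ x * hla + φ y * hmb - ω * hla - ω * hmb + ω * hsum
        rw [heqr]
      · -- s > 0
        have hsne : s ≠ 0 := ne_of_gt hs0
        have hs1 : s ≤ 1 := by nlinarith
        set w : Fin n → ℝ := (lam * a / s) • x + (mu * b / s) • y with hw
        have hwP : w ∈ P := by
          apply hPconv hx hy (by positivity) (by positivity)
          field_simp; exact hs.symm
        have hcomb : lam • (a • x + (1 - a) • z) + mu • (b • y + (1 - b) • z)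
            = s • w + (1 - s) • z := by
          rw [hw]
          have h1 : s • ((lam * a / s) • x + (mu * b / s) • y)
              = (lam * a) • x + (mu * b) • y := by
            rw [smul_add, smul_smul, smul_smul, mul_div_cancel₀ _ hsne,
              mul_div_cancel₀ _ hsne]
          have h2 : (1 : ℝ) - s = lam * (1 - a) + mu * (1 - b) := by rw [hs]; ring_nf; linarith
          rw [h1, h2]
          module
        rw [hcomb, hspec w hwP s hs0.le hs1]
        have hconv := hφ.2 hx hy (show (0:ℝ) ≤ lam * a / s by positivity)
          (show (0:ℝ) ≤ mu * b / s by positivity)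
          (show lam * a / s + mu * b / s = 1 by field_simp; exact hs.symm)
        have hkey : s * φ w ≤ lam * a * φ x + mu * b * φ y := by
          have h5 := mul_le_mul_of_nonneg_left hconv hs0.le
          calc s * φ w ≤ s * ((lam * a / s) • φ x + (mu * b / s) • φ y) := h5
            _ = lam * a * φ x + mu * b * φ y := by
                simp only [smul_eq_mul]
                field_simp
        have hrhs : lam * (a * φ x + (1 - a) * ω) + mu * (b * φ y + (1 - b) * ω)
            = lam * a * φ x + mu * b * φ y + (1 - s) * ω := by
          rw [hs]; linear_combination ω * hsum
        simp only [smul_eq_mul]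
        rw [hrhs]
        linarith [hkey]
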